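/- Mistake lower bound for deterministic algorithms in online multiclass classification: Let K ≥ 2 be an integer, γ > 0, and R ≥ γ. For any deterministic prediction rule A, i.e., any function that maps a finite history ((x_1,y_1),…,(x_{t−1},y_{t−1})) of labeled examples together with a current feature vector x_t to a prediction ŷ_t ∈ {1,…,K}, there exist a positive integer T and a sequence of labeled examples (x_1,y_1),…,(x_T,y_T) in ℝ^T (with the standard inner product) that is weakly linearly separable with margin γ, satisfies ‖x_t‖ ≤ R for all t, and on which the number of rounds t with A((x_1,y_1),…,(x_{t−1},y_{t−1}), x_t) ≠ y_t is at least (1/2)·⌊(R/γ)²⌋. -/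

import Mathlib

open scoped RealInnerProductSpace
open Finset

/-- Labeled examples are weakly linearly separable with margin `γ`. -/
def WeaklySeparable {V : Type*} [NormedAddCommGroup V] [InnerProductSpace ℝ V]
    {T K : ℕ} (x : Fin T → V) (y : Fin T → Fin K) (γ : ℝ) : Prop :=
  ∃ w : Fin K → V, (∑ i, ‖w i‖ ^ 2 ≤ 1) ∧
    ∀ t : Fin T, ∀ i : Fin K, i ≠ y t → ⟪x t, w (y t)⟫ ≥ ⟪x t, w i⟫ + γ

/-- A class different from `k`. -/
def pickOther {K : ℕ} (hK : 2 ≤ K) (k : Fin K) : Fin K :=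
  if k.val = 0 then ⟨1, by omega⟩ else ⟨0, by omega⟩

lemma pickOther_ne {K : ℕ} (hK : 2 ≤ K) (k : Fin K) : pickOther hK k ≠ k := by
  unfold pickOther
  split <;> (intro h; apply_fun Fin.val at h; simp_all)

/-- Adversarial label sequence. -/
def advY (K T : ℕ) (hK : 2 ≤ K)
    (A : List (EuclideanSpace ℝ (Fin T) × Fin K) → EuclideanSpace ℝ (Fin T) → Fin K)
    (x : Fin T → EuclideanSpace ℝ (Fin T)) : ℕ → Fin K
  | n =>
    if h : n < T then
      pickOther hK (A (List.ofFn fun s : Fin n =>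
        (x ⟨s.val, by omega⟩, advY K T hK A x s.val)) (x ⟨n, h⟩))
    else ⟨0, by omega⟩
termination_by n => n
decreasing_by exact s.isLt

/-- Mistake lower bound for deterministic algorithms in online multiclass classification.
A deterministic prediction rule is a function `A` that, in every Euclidean space `ℝ^T`,
maps a finite history of labeled examples together with a current feature vector to a
predicted class in `{1,…,K}`. For any such rule there is a weakly linearly separable
sequence of examples (with margin `γ`, norms at most `R`) on which the rule makes at
least `(1/2)⌊(R/γ)²⌋` mistakes. -/
theorem deterministic_mistake_lower_bound
    (K : ℕ) (hK : 2 ≤ K) (γ R : ℝ) (hγ : 0 < γ) (hR : γ ≤ R)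
    (A : ∀ T : ℕ, List (EuclideanSpace ℝ (Fin T) × Fin K) →
          EuclideanSpace ℝ (Fin T) → Fin K) :
    ∃ (T : ℕ) (_ : 0 < T) (x : Fin T → EuclideanSpace ℝ (Fin T)) (y : Fin T → Fin K),
      WeaklySeparable x y γ ∧ (∀ t, ‖x t‖ ≤ R) ∧
      (1 / 2 : ℝ) * (⌊(R / γ) ^ 2⌋₊ : ℝ) ≤
        ((Finset.univ.filter fun t : Fin T =>
            A T (List.ofFn fun s : Fin t.val =>
                  (x ⟨s.val, s.isLt.trans t.isLt⟩, y ⟨s.val, s.isLt.trans t.isLt⟩))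
              (x t) ≠ y t).card : ℝ) := by
  set T : ℕ := ⌊(R / γ) ^ 2⌋₊ with hT
  have hRpos : 0 < R := lt_of_lt_of_le hγ hR
  have hTpos : 0 < T := by
    rw [hT]
    apply Nat.floor_pos.2
    have : (1 : ℝ) ≤ R / γ := (one_le_div hγ).2 hR
    nlinarith
  have hTle : (T : ℝ) ≤ (R / γ) ^ 2 :=
    Nat.floor_le (by positivity)
  set x : Fin T → EuclideanSpace ℝ (Fin T) := fun t => EuclideanSpace.single t R with hx
  set y : Fin T → Fin K := fun t => advY K T hK (A T) x t.val with hy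
  refine ⟨T, hTpos, x, y, ?_, ?_, ?_⟩
  · -- weakly separable
    refine ⟨fun i => ∑ t ∈ univ.filter fun t => y t = i,
      EuclideanSpace.single t (γ / R), ?_, ?_⟩
    · have hnorm : ∀ i : Fin K,
          ‖∑ t ∈ univ.filter fun t => y t = i, EuclideanSpace.single t (γ / R)‖ ^ 2
            = ((univ.filter fun t => y t = i).card : ℝ) * (γ / R) ^ 2 := by
        intro i
        rw [← real_inner_self_eq_norm_sq]
        rw [inner_sum]
        have : ∀ t ∈ univ.filter fun t => y t = i,
            ⟪(∑ s ∈ univ.filter fun s => y s = i, EuclideanSpace.single s (γ / R)),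
              EuclideanSpace.single t (γ / R)⟫ = (γ / R) ^ 2 := by
          intro t ht
          rw [EuclideanSpace.inner_single_right]
          have : (∑ s ∈ univ.filter fun s => y s = i,
              EuclideanSpace.single s (γ / R)) t = (γ / R) := by
            rw [WithLp.ofLp_sum, Finset.sum_apply]
            rw [Finset.sum_eq_single t]
            · simp [EuclideanSpace.single_apply]
            · intro s _ hs
              simp [EuclideanSpace.single_apply, Ne.symm hs]
            · intro h; exact absurd ht h
          rw [this]
          simp [sq]
        rw [Finset.sum_congr rfl this]
        rw [Finset.sum_const, nsmul_eq_mul]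
      have hsum : ∑ i : Fin K, ‖∑ t ∈ univ.filter fun t => y t = i,
          EuclideanSpace.single t (γ / R)‖ ^ 2 = (T : ℝ) * (γ / R) ^ 2 := by
        rw [Finset.sum_congr rfl fun i _ => hnorm i, ← Finset.sum_mul]
        congr 1
        rw [← Nat.cast_sum]
        congr 1
        have hc := Finset.card_eq_sum_card_fiberwise
          (f := y) (s := univ) (t := univ) (fun t _ => mem_univ _)
        rw [← hc, Finset.card_fin]
      rw [hsum]
      have hγR : (γ / R) ^ 2 = ((R / γ) ^ 2)⁻¹ := by
        rw [div_pow, div_pow, inv_div]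
      rw [hγR]
      rw [← div_eq_mul_inv, div_le_one (by positivity)]
      exact hTle
    · intro t i hi
      have hin : ∀ j : Fin K,
          ⟪x t, ∑ s ∈ univ.filter fun s => y s = j, EuclideanSpace.single s (γ / R)⟫
            = if y t = j then γ else 0 := by
        intro j
        rw [inner_sum]
        have : ∀ s : Fin T, ⟪x t, EuclideanSpace.single s (γ / R)⟫
            = if s = t then γ else 0 := by
          intro s
          rw [EuclideanSpace.inner_single_right, hx]
          simp only [EuclideanSpace.single_apply]
          split
          · simp only [starRingEnd_apply, star_trivial]
            field_simp
          · simp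
        rw [Finset.sum_congr rfl fun s _ => this s]
        rw [Finset.sum_ite_eq']
        simp only [mem_filter, mem_univ, true_and]
      rw [ge_iff_le, hin, hin, if_pos rfl, if_neg (Ne.symm hi)]
      linarith
  · intro t
    rw [EuclideanSpace.norm_single]
    rw [Real.norm_eq_abs, abs_of_pos hRpos]
  · -- every round is a mistake
    have hall : (univ.filter fun t : Fin T =>
        A T (List.ofFn fun s : Fin t.val =>
          (x ⟨s.val, s.isLt.trans t.isLt⟩, y ⟨s.val, s.isLt.trans t.isLt⟩)) (x t) ≠ y t)
        = univ := by
      apply Finset.eq_univ_of_forall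
      intro t
      simp only [mem_filter, mem_univ, true_and]
      intro h
      have hyt : y t = pickOther hK (A T (List.ofFn fun s : Fin t.val =>
          (x ⟨s.val, by omega⟩, advY K T hK (A T) x s.val)) (x ⟨t.val, t.isLt⟩)) := by
        show advY K T hK (A T) x t.val = _
        rw [advY]
        rw [dif_pos t.isLt]
      have hlist : (List.ofFn fun s : Fin t.val =>
            (x ⟨s.val, s.isLt.trans t.isLt⟩, y ⟨s.val, s.isLt.trans t.isLt⟩))
          = (List.ofFn fun s : Fin t.val =>
            (x ⟨s.val, by omega⟩, advY K T hK (A T) x s.val)) := by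
        congr 1
      rw [hlist] at h
      have : x t = x ⟨t.val, t.isLt⟩ := by congr
      rw [this] at h
      exact pickOther_ne hK _ (h ▸ hyt.symm)
    rw [hall, Finset.card_univ, Fintype.card_fin]
    have : (0 : ℝ) ≤ (T : ℝ) := Nat.cast_nonneg _
    linarith
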